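/- Let X be a self-adjoint pseudodifferential operator in ∂ over a commutative differential algebra V of the form X = ∂^{2n+2} + ∂^n a_n ∂^n + … + ∂ a_1 ∂ + a_0 + ∂⁻¹ a_{−1} ∂⁻¹ + … (i.e. X = Σ_{k ≤ n} ∂^k a_k ∂^k with a_{n+1}=1). Then the positive part (∂⁻¹X)₊ composed with ∂⁻¹ on the right, namely (∂⁻¹X)₊ ∂⁻¹, equals ∂^{2n} + ∂^{n−1} a_n ∂^{n−1} + … + a_1, which is a self-adjoint differential operator. -/

import Mathlib

/-- **Computation of `(∂⁻¹X)₊∂⁻¹` for a self-adjoint operator** (Lemma 2 of the paper).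

`R` models the ring `V((∂⁻¹))` of pseudodifferential operators in `∂` over a commutative
differential algebra `V`.  The additive map `pos` is the projection `P ↦ P₊` onto the
subring of differential operators (the subring generated by `V` and `∂`): it fixes
differential operators, takes values in them, kills `∂⁻¹`, and the kernel
(the negative-order operators) is stable under multiplication by elements of `V` and
by `∂⁻¹` on either side.  If
`X = ∂^{2n+2} + ∂ⁿaₙ∂ⁿ + … + ∂a₁∂ + a₀ + N` is self-adjoint, with `N` of negative
order, then `(∂⁻¹X)₊∂⁻¹ = ∂^{2n} + ∂^{n-1}aₙ∂^{n-1} + … + a₁`, and this differential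
operator is self-adjoint. -/
theorem pos_part_of_dinv_mul_self_adjoint
    {V R : Type*} [CommRing V] [Algebra ℂ V]
    [Ring R] [StarRing R]
    (ι : V →+* R) (hι : Function.Injective ι)
    (d : Rˣ)
    (δ : Derivation ℂ V V)
    (hleib : ∀ v : V, (d : R) * ι v = ι v * (d : R) + ι (δ v))
    (hstar_d : star ((d : R)) = -(d : R))
    (hstar_ι : ∀ v : V, star (ι v) = ι v)
    -- `pos` is the projection onto the nonnegative (differential-operator) part
    (pos : R →+ R)
    (hposDO : ∀ x ∈ Subring.closure (Set.range ⇑ι ∪ {(d : R)}), pos x = x)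
    (hposmem : ∀ x : R, pos x ∈ Subring.closure (Set.range ⇑ι ∪ {(d : R)}))
    (hpos_dinv : pos ((d⁻¹ : Rˣ) : R) = 0)
    (hneg : ∀ x : R, pos x = 0 → ∀ v : V,
      pos (ι v * x) = 0 ∧ pos (x * ι v) = 0 ∧
      pos (((d⁻¹ : Rˣ) : R) * x) = 0 ∧ pos (x * ((d⁻¹ : Rˣ) : R)) = 0)
    (hnegmul : ∀ x y : R, pos x = 0 → pos y = 0 → pos (x * y) = 0)
    (n : ℕ) (a : ℕ → V) (N : R)
    (hN : pos N = 0)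
    (X : R)
    (hXdef : X = (d : R) ^ (2 * n + 2)
      + (∑ k ∈ Finset.range (n + 1), (d : R) ^ k * ι (a k) * (d : R) ^ k) + N)
    (hXsa : star X = X) :
    pos (((d⁻¹ : Rˣ) : R) * X) * ((d⁻¹ : Rˣ) : R)
        = (d : R) ^ (2 * n)
          + ∑ k ∈ Finset.Icc 1 n, (d : R) ^ (k - 1) * ι (a k) * (d : R) ^ (k - 1) ∧
      star (pos (((d⁻¹ : Rˣ) : R) * X) * ((d⁻¹ : Rˣ) : R))
        = pos (((d⁻¹ : Rˣ) : R) * X) * ((d⁻¹ : Rˣ) : R) := by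

  have hdS : (d : R) ∈ Subring.closure (Set.range ⇑ι ∪ {(d : R)}) :=
    Subring.subset_closure (Or.inr rfl)
  have hιS : ∀ v : V, ι v ∈ Subring.closure (Set.range ⇑ι ∪ {(d : R)}) :=
    fun v => Subring.subset_closure (Or.inl ⟨v, rfl⟩)
  have hdi : ∀ m : ℕ, ((d⁻¹ : Rˣ) : R) * (d : R) ^ (m + 1) = (d : R) ^ m := by
    intro m
    rw [pow_succ', ← mul_assoc, Units.inv_mul, one_mul]
  have hid : ∀ m : ℕ, (d : R) ^ (m + 1) * ((d⁻¹ : Rˣ) : R) = (d : R) ^ m := by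
    intro m
    rw [pow_succ, mul_assoc, Units.mul_inv, mul_one]
  -- decompose d⁻¹ * X
  have hX : ((d⁻¹ : Rˣ) : R) * X
      = ((d : R) ^ (2 * n + 1)
          + ∑ j ∈ Finset.range n, (d : R) ^ j * ι (a (j + 1)) * (d : R) ^ (j + 1))
        + (((d⁻¹ : Rˣ) : R) * ι (a 0) + ((d⁻¹ : Rˣ) : R) * N) := by
    rw [hXdef, Finset.sum_range_succ' (fun k => (d : R) ^ k * ι (a k) * (d : R) ^ k)]
    rw [mul_add, mul_add, mul_add, Finset.mul_sum]
    have h1 : ((d⁻¹ : Rˣ) : R) * (d : R) ^ (2 * n + 2) = (d : R) ^ (2 * n + 1) := hdi _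
    have h2 : ∀ j : ℕ, ((d⁻¹ : Rˣ) : R) * ((d : R) ^ (j + 1) * ι (a (j + 1)) * (d : R) ^ (j + 1))
        = (d : R) ^ j * ι (a (j + 1)) * (d : R) ^ (j + 1) := by
      intro j
      rw [← mul_assoc, ← mul_assoc, hdi]
    have h3 : ((d⁻¹ : Rˣ) : R) * ((d : R) ^ 0 * ι (a 0) * (d : R) ^ 0)
        = ((d⁻¹ : Rˣ) : R) * ι (a 0) := by
      simp
    rw [h1, h3]
    rw [Finset.sum_congr rfl (fun j _ => h2 j)]
    abel
  have key : pos (((d⁻¹ : Rˣ) : R) * X)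
      = (d : R) ^ (2 * n + 1)
        + ∑ j ∈ Finset.range n, (d : R) ^ j * ι (a (j + 1)) * (d : R) ^ (j + 1) := by
    rw [hX, map_add, map_add]
    have hz1 : pos (((d⁻¹ : Rˣ) : R) * ι (a 0)) = 0 := (hneg _ hpos_dinv (a 0)).2.1
    have hz2 : pos (((d⁻¹ : Rˣ) : R) * N) = 0 := (hneg N hN (a 0)).2.2.1
    rw [map_add, hz1, hz2, add_zero, add_zero]
    rw [hposDO _ (pow_mem hdS _),
      hposDO _ (Subring.sum_mem _ (fun j _ =>
        Subring.mul_mem _ (Subring.mul_mem _ (pow_mem hdS _) (hιS _)) (pow_mem hdS _)))]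
  have hval : pos (((d⁻¹ : Rˣ) : R) * X) * ((d⁻¹ : Rˣ) : R)
      = (d : R) ^ (2 * n)
        + ∑ k ∈ Finset.Icc 1 n, (d : R) ^ (k - 1) * ι (a k) * (d : R) ^ (k - 1) := by
    rw [key, add_mul, Finset.sum_mul, hid]
    congr 1
    have hIcc : ∑ k ∈ Finset.Icc 1 n, (d : R) ^ (k - 1) * ι (a k) * (d : R) ^ (k - 1)
        = ∑ j ∈ Finset.range n, (d : R) ^ j * ι (a (j + 1)) * (d : R) ^ j := by
      rw [← Finset.Ico_add_one_right_eq_Icc, Finset.sum_Ico_eq_sum_range, Nat.add_sub_cancel]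
      exact Finset.sum_congr rfl (fun j _ => by rw [Nat.add_sub_cancel_left, add_comm 1 j])
    rw [hIcc]
    exact Finset.sum_congr rfl (fun j _ => by rw [mul_assoc, hid])
  refine ⟨hval, ?_⟩
  rw [hval]
  have hterm : ∀ (m : ℕ) (v : V),
      star ((d : R) ^ m * ι v * (d : R) ^ m) = (d : R) ^ m * ι v * (d : R) ^ m := by
    intro m v
    rw [star_mul, star_mul, star_pow, hstar_d, hstar_ι]
    rcases Nat.even_or_odd m with h | h
    · rw [h.neg_pow, mul_assoc]
    · rw [h.neg_pow]
      simp [neg_mul, mul_neg, neg_neg, mul_assoc]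
  rw [star_add, star_pow, hstar_d, Even.neg_pow ⟨n, by ring⟩, star_sum]
  congr 1
  exact Finset.sum_congr rfl (fun k _ => hterm _ _)
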